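/- Let X be a Banach space and {T(t)}_{t≥0} an operator semigroup on X (i.e. T(0) = I and T(t)T(s) = T(t+s)) consisting of bounded operators with ‖T(t)‖ uniformly bounded on bounded intervals. If lim_{t→0+} T(t)x = x weakly in X for each x ∈ X, then {T(t)}_{t≥0} is a C0-semigroup, i.e. lim_{t→0+} T(t)x = x strongly for each x ∈ X. -/

import Mathlib

open Filter Topology MeasureTheory Set

namespace YosidaAux

variable {X : Type*} [NormedAddCommGroup X] [NormedSpace ℝ X]

/-- A functional strictly bounded below on a submodule vanishes on it, and the bound is < 0. -/
lemma vanish_on_submodule (N : Submodule ℝ X) (f : X →L[ℝ] ℝ) (u : ℝ)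
    (h : ∀ b ∈ N, u < f b) : (∀ b ∈ N, f b = 0) ∧ u < 0 := by
  have h0 : u < 0 := by simpa using h 0 N.zero_mem
  refine ⟨fun b hb => ?_, h0⟩
  by_contra hfb
  have h2 := h (((u - 1) / f b) • b) (N.smul_mem _ hb)
  rw [_root_.map_smul, smul_eq_mul, div_mul_cancel₀ _ hfb] at h2
  linarith

/-- A right-continuous real function is measurable. -/
lemma measurable_of_rightCont {g : ℝ → ℝ}
    (hg : ∀ s : ℝ, Tendsto g (𝓝[≥] s) (𝓝 (g s))) : Measurable g := by
  have h2 : ∀ n : ℕ, (0:ℝ) < 2 ^ n := fun n => by positivity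
  have key : ∀ s : ℝ, Tendsto (fun n : ℕ => g ((⌈s * 2 ^ n⌉ : ℝ) / 2 ^ n)) atTop (𝓝 (g s)) := by
    intro s
    apply (hg s).comp
    have hlb : ∀ n : ℕ, s ≤ (⌈s * 2 ^ n⌉ : ℝ) / 2 ^ n := by
      intro n; rw [le_div_iff₀ (h2 n)]; exact Int.le_ceil _
    apply tendsto_nhdsWithin_of_tendsto_nhds_of_eventually_within
    · have hub : ∀ n : ℕ, (⌈s * 2 ^ n⌉ : ℝ) / 2 ^ n ≤ s + (1/2) ^ n := by
        intro n
        rw [div_le_iff₀ (h2 n)]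
        have h1 := (Int.ceil_lt_add_one (s * 2 ^ n)).le
        have : (s + (1/2) ^ n) * 2 ^ n = s * 2 ^ n + 1 := by
          rw [add_mul, ← mul_pow]; norm_num
        linarith
      have hupper : Tendsto (fun n : ℕ => s + (1/2:ℝ) ^ n) atTop (𝓝 s) := by
        have := tendsto_pow_atTop_nhds_zero_of_lt_one (by norm_num : (0:ℝ) ≤ 1/2)
          (by norm_num : (1/2:ℝ) < 1)
        simpa using tendsto_const_nhds.add this
      exact tendsto_of_tendsto_of_tendsto_of_le_of_le tendsto_const_nhds hupper hlb hub
    · exact Eventually.of_forall fun n => hlb n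
  apply measurable_of_tendsto_metrizable
    (f := fun n s => g ((⌈s * 2 ^ n⌉ : ℝ) / 2 ^ n)) (fun n => ?_) (tendsto_pi_nhds.2 key)
  show Measurable fun s : ℝ => g ((⌈s * 2 ^ n⌉ : ℝ) / 2 ^ n)
  have : (fun s : ℝ => g ((⌈s * 2 ^ n⌉ : ℝ) / 2 ^ n))
      = (fun k : ℤ => g ((k : ℝ) / 2 ^ n)) ∘ (fun s : ℝ => ⌈s * 2 ^ n⌉) := rfl
  rw [this]
  exact measurable_from_top.comp (measurable_id.mul_const _).ceil

end YosidaAux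


namespace YosidaAux2

variable {X : Type*} [NormedAddCommGroup X] [NormedSpace ℝ X]

/-- Pettis measurability: a weakly measurable function with values in a closed separable
submodule is strongly measurable. -/
lemma stronglyMeasurable_of_weakly {α : Type*} [MeasurableSpace α]
    (M : Submodule ℝ X) (hcl : IsClosed (M : Set X))
    (hsep : TopologicalSpace.IsSeparable (M : Set X))
    (F : α → X) (hmem : ∀ a, F a ∈ M)
    (hmeas : ∀ f : X →L[ℝ] ℝ, Measurable fun a => f (F a)) :
    StronglyMeasurable F := by
  borelize X
  rw [stronglyMeasurable_iff_measurable_separable]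
  refine ⟨?_, hsep.mono (range_subset_iff.2 hmem)⟩
  haveI : TopologicalSpace.SeparableSpace (M : Set X) := hsep.separableSpace
  haveI : Nonempty (M : Set X) := ⟨⟨0, M.zero_mem⟩⟩
  set d : ℕ → (M : Set X) := TopologicalSpace.denseSeq (M : Set X) with hd_def
  have hd : ∀ z ∈ M, ∀ ε : ℝ, 0 < ε → ∃ n, ‖z - (d n : X)‖ < ε := by
    intro z hz ε hε
    obtain ⟨n, hn⟩ := Metric.denseRange_iff.1
      (TopologicalSpace.denseRange_denseSeq (M : Set X)) ⟨z, hz⟩ ε hε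
    exact ⟨n, by simpa [Subtype.dist_eq, dist_eq_norm, hd_def] using hn⟩
  choose f hf1 hf2 using fun n => exists_dual_vector'' ℝ ((d n : X))
  have habs : ∀ (n : ℕ) (z : X), |f n z| ≤ ‖z‖ := by
    intro n z
    calc |f n z| ≤ ‖f n‖ * ‖z‖ := (f n).le_opNorm z
    _ ≤ 1 * ‖z‖ := by gcongr; exact hf1 n
    _ = ‖z‖ := one_mul _
  have key : ∀ z ∈ M, ∀ r : ℝ, (∀ n, f n z ≤ r) → ‖z‖ ≤ r := by
    intro z hz r h
    refine le_of_forall_pos_le_add fun ε hε => ?_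
    obtain ⟨n, hn⟩ := hd z hz (ε / 2) (by positivity)
    have h1 : ‖z‖ - ‖(d n : X)‖ ≤ ‖z - (d n : X)‖ := norm_sub_norm_le _ _
    have h2 : f n (d n : X) = ‖(d n : X)‖ := by simpa using hf2 n
    have h3 : f n (d n : X) - f n z ≤ ε / 2 := by
      have e1 : f n (d n : X) - f n z = f n ((d n : X) - z) := by rw [map_sub]
      have e2 : |f n ((d n : X) - z)| ≤ ‖(d n : X) - z‖ := habs n _
      rw [norm_sub_rev] at hn
      calc f n (d n : X) - f n z = f n ((d n : X) - z) := e1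
        _ ≤ |f n ((d n : X) - z)| := le_abs_self _
        _ ≤ ‖(d n : X) - z‖ := e2
        _ ≤ ε / 2 := hn.le
    linarith [h n]
  have ball_meas : ∀ c ∈ M, ∀ r : ℝ, MeasurableSet (F ⁻¹' Metric.ball c r) := by
    intro c hc r
    have heq : F ⁻¹' Metric.ball c r
        = ⋃ m : ℕ, ⋂ n : ℕ, {a | f n (F a) - f n c ≤ r - 1 / (m + 1)} := by
      ext a
      simp only [mem_preimage, Metric.mem_ball, dist_eq_norm, mem_iUnion, mem_iInter,
        mem_setOf_eq]
      constructor
      · intro h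
        obtain ⟨m, hm⟩ := exists_nat_one_div_lt (sub_pos.2 h)
        refine ⟨m, fun n => ?_⟩
        have e1 : f n (F a) - f n c = f n (F a - c) := by rw [map_sub]
        have e2 : f n (F a - c) ≤ ‖F a - c‖ := (le_abs_self _).trans (habs n _)
        linarith
      · rintro ⟨m, hm⟩
        have hz : F a - c ∈ M := M.sub_mem (hmem a) hc
        have hk := key _ hz (r - 1 / (m + 1)) fun n => by
          rw [map_sub]; exact hm n
        have hpos : (0:ℝ) < 1 / (m + 1) := by positivity
        linarith
    rw [heq]
    exact MeasurableSet.iUnion fun m => MeasurableSet.iInter fun n =>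
      measurableSet_le ((hmeas (f n)).sub measurable_const) measurable_const
  have hXb : ‹MeasurableSpace X› = MeasurableSpace.generateFrom {U : Set X | IsOpen U} :=
    ‹BorelSpace X›.measurable_eq
  rw [hXb]
  apply measurable_generateFrom
  intro U hU
  replace hU : IsOpen U := hU
  have heq : F ⁻¹' U = ⋃ (n : ℕ) (q : ℚ) (_ : 0 < (q:ℝ) ∧ Metric.ball (d n : X) q ∩ M ⊆ U),
      F ⁻¹' Metric.ball (d n : X) q := by
    ext a
    simp only [mem_preimage, mem_iUnion]
    constructor
    · intro ha
      obtain ⟨ε, hε, hball⟩ := Metric.isOpen_iff.1 hU (F a) ha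
      obtain ⟨q, hq0, hqε⟩ := exists_rat_btwn (show (0:ℝ) < ε/2 by linarith)
      obtain ⟨n, hn⟩ := hd (F a) (hmem a) q hq0
      rw [norm_sub_rev] at hn
      refine ⟨n, q, ⟨hq0, fun z hz => ?_⟩, ?_⟩
      · apply hball
        have h1 : dist z (d n : X) < q := Metric.mem_ball.1 hz.1
        rw [Metric.mem_ball]
        calc dist z (F a) ≤ dist z (d n : X) + dist (d n : X) (F a) := dist_triangle _ _ _
          _ < q + q := by
              have hB : dist (d n : X) (F a) < q := by rw [dist_eq_norm]; exact hn
              exact add_lt_add h1 hB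
          _ < ε := by linarith
      · rw [Metric.mem_ball, dist_comm, dist_eq_norm]
        exact hn
    · rintro ⟨n, q, ⟨hq0, hsub⟩, hmem'⟩
      exact hsub ⟨hmem', hmem a⟩
  have : MeasurableSet[MeasurableSpace.generateFrom {U : Set X | IsOpen U}] U → True := fun _ => trivial
  show MeasurableSet (F ⁻¹' U)
  rw [heq]
  exact MeasurableSet.iUnion fun n => MeasurableSet.iUnion fun q =>
    MeasurableSet.iUnion fun _ => ball_meas _ (d n).2 _

end YosidaAux2



open YosidaAux YosidaAux2



open Filter Topology

/-- Yosida's theorem: an operator semigroup on a Banach space, locally uniformly bounded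
in norm, which is weakly continuous at `t = 0⁺`, is strongly continuous at `t = 0⁺`,
i.e. it is a C0-semigroup. -/
theorem stmt2 {X : Type*} [NormedAddCommGroup X] [NormedSpace ℝ X] [CompleteSpace X]
    (T : ℝ → X →L[ℝ] X)
    (hT0 : T 0 = 1)
    (hTadd : ∀ s t : ℝ, 0 ≤ s → 0 ≤ t → T (s + t) = (T s).comp (T t))
    (hbdd : ∀ b : ℝ, ∃ C : ℝ, ∀ t ∈ Set.Icc (0 : ℝ) b, ‖T t‖ ≤ C)
    (hweak : ∀ x : X, ∀ f : X →L[ℝ] ℝ,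
        Tendsto (fun t : ℝ => f (T t x)) (𝓝[>] 0) (𝓝 (f x))) :
    ∀ x : X, Tendsto (fun t : ℝ => T t x) (𝓝[>] 0) (𝓝 x) := by
  intro x
  obtain ⟨C₀, hC₀⟩ := hbdd 2
  set C : ℝ := max C₀ 1 with hC_def
  have hC1 : (1:ℝ) ≤ C := le_max_right _ _
  have hC0 : (0:ℝ) ≤ C := by linarith
  have hC : ∀ t : ℝ, 0 ≤ t → t ≤ 2 → ‖T t‖ ≤ C :=
    fun t h1 h2 => le_trans (hC₀ t ⟨h1, h2⟩) (le_max_left _ _)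
  set F : ℝ → X := fun s => T (max s 0) x with hF_def
  have hF_nonneg : ∀ s : ℝ, 0 ≤ s → F s = T s x := fun s hs => by
    simp only [hF_def, max_eq_left hs]
  have hF0 : ∀ s : ℝ, s ≤ 0 → F s = x := fun s hs => by
    simp [hF_def, max_eq_right hs, hT0]
  have hFb : ∀ s : ℝ, s ≤ 2 → ‖F s‖ ≤ C * ‖x‖ := by
    intro s hs
    refine le_trans ((T _).le_opNorm x) ?_
    exact mul_le_mul_of_nonneg_right
      (hC _ (le_max_right _ _) (max_le hs (by norm_num))) (norm_nonneg x)
  -- weak right-continuity of orbits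
  have hrc : ∀ (y : X) (f : X →L[ℝ] ℝ) (s : ℝ), 0 ≤ s →
      Tendsto (fun u : ℝ => f (T u y)) (𝓝[>] s) (𝓝 (f (T s y))) := by
    intro y f s hs
    have h1 : Tendsto (fun u : ℝ => u - s) (𝓝[>] s) (𝓝[>] (0:ℝ)) := by
      apply tendsto_nhdsWithin_of_tendsto_nhds_of_eventually_within
      · have h := (continuous_id.sub continuous_const : Continuous fun u : ℝ => u - s).tendsto s
        rw [← sub_self s]; exact h.mono_left nhdsWithin_le_nhds
      · filter_upwards [self_mem_nhdsWithin] with u hu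
        exact sub_pos.2 (mem_Ioi.1 hu)
    have h2 := (hweak (T s y) f).comp h1
    apply h2.congr'
    filter_upwards [self_mem_nhdsWithin] with u hu
    have hu' : (0:ℝ) ≤ u - s := by
      have : s < u := hu
      linarith
    have h3 : T (u - s + s) = (T (u - s)).comp (T s) := hTadd _ _ hu' hs
    have : u - s + s = u := by ring
    rw [this] at h3
    show f (T (u - s) (T s y)) = f (T u y)
    rw [h3]
    rfl
  -- weak right-continuity of F everywhere
  have grc : ∀ (f : X →L[ℝ] ℝ) (s : ℝ), Tendsto (fun u => f (F u)) (𝓝[≥] s) (𝓝 (f (F s))) := by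
    intro f s
    rcases lt_or_ge s 0 with hs | hs
    · rw [hF0 s hs.le]
      apply tendsto_const_nhds.congr'
      have : ∀ᶠ u in 𝓝[≥] s, u < 0 :=
        eventually_nhdsWithin_of_eventually_nhds (tendsto_id.eventually_lt_const hs)
      filter_upwards [this] with u hu
      rw [hF0 u hu.le]
    · have hins : Ici s = insert s (Ioi s) := by
        ext u
        simp only [mem_Ici, mem_insert_iff, mem_Ioi]
        constructor
        · intro h; rcases eq_or_lt_of_le h with h' | h'
          · exact Or.inl h'.symm
          · exact Or.inr h'
        · rintro (rfl | h); exacts [le_rfl, h.le]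
      rw [show (𝓝[≥] s) = 𝓝[insert s (Ioi s)] s by rw [← hins], nhdsWithin_insert,
        tendsto_sup]
      constructor
      · exact tendsto_pure_nhds _ _
      · rw [hF_nonneg s hs]
        apply (hrc x f s hs).congr'
        filter_upwards [self_mem_nhdsWithin] with u hu
        rw [hF_nonneg u (hs.trans (le_of_lt hu))]
  -- the separable closed submodule containing the orbit
  set s0 : Set X := F '' (Set.range (fun q : ℚ => (q:ℝ))) with hs0_def
  have hs0 : s0.Countable := (Set.countable_range _).image _
  set M : Submodule ℝ X := (Submodule.span ℝ s0).topologicalClosure with hM_def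
  have hMclosed : IsClosed (M : Set X) := Submodule.isClosed_topologicalClosure _
  have hMsep : TopologicalSpace.IsSeparable (M : Set X) := by
    rw [hM_def, Submodule.topologicalClosure_coe]
    exact (hs0.isSeparable.span).closure
  have hmemM : ∀ u : ℝ, F u ∈ M := by
    intro u
    by_contra hu
    obtain ⟨f, v, hfv, hv⟩ := geometric_hahn_banach_point_closed M.convex hMclosed hu
    obtain ⟨hvanish, hv0⟩ := vanish_on_submodule M f v hv
    have hq : ∀ n : ℕ, ∃ q : ℚ, u < (q:ℝ) ∧ (q:ℝ) < u + 1/(n+1) := by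
      intro n
      have : u < u + 1/(n+1) := by
        have : (0:ℝ) < 1/(n+1) := by positivity
        linarith
      exact exists_rat_btwn this
    choose q hq1 hq2 using hq
    have hten : Tendsto (fun n : ℕ => ((q n : ℝ))) atTop (𝓝[≥] u) := by
      apply tendsto_nhdsWithin_of_tendsto_nhds_of_eventually_within
      · have hupper : Tendsto (fun n : ℕ => u + 1/((n:ℝ)+1)) atTop (𝓝 u) := by
          simpa using (tendsto_const_nhds (x := u)).add tendsto_one_div_add_atTop_nhds_zero_nat
        exact tendsto_of_tendsto_of_tendsto_of_le_of_le tendsto_const_nhds hupper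
          (fun n => (hq1 n).le) (fun n => (hq2 n).le)
      · exact Eventually.of_forall fun n => (hq1 n).le
    have h1 : Tendsto (fun n => f (F (q n))) atTop (𝓝 (f (F u))) := (grc f u).comp hten
    have h2 : ∀ n : ℕ, f (F ((q n : ℝ))) = 0 := fun n =>
      hvanish _ (Submodule.le_topologicalClosure _
        (Submodule.subset_span ⟨(q n : ℝ), Set.mem_range_self _, rfl⟩))
    have h3 : f (F u) = 0 := by
      have := h1.congr fun n => h2 n
      exact tendsto_nhds_unique this tendsto_const_nhds
    linarith
  -- strong measurability and integrability
  have hsm : MeasureTheory.StronglyMeasurable F :=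
    stronglyMeasurable_of_weakly M hMclosed hMsep F hmemM
      (fun f => measurable_of_rightCont (grc f))
  have hInt : ∀ a b : ℝ, 0 ≤ a → a ≤ 2 → b ≤ 2 → IntervalIntegrable F volume a b := by
    intro a b ha ha2 hb2
    rw [intervalIntegrable_iff]
    apply MeasureTheory.Integrable.mono' (g := fun _ => C * ‖x‖)
    · refine (integrableOn_const_iff).2 (Or.inr ?_)
      rw [Set.uIoc]
      exact measure_Ioc_lt_top
    · exact hsm.aestronglyMeasurable
    · refine (ae_restrict_iff' measurableSet_uIoc).2 (Eventually.of_forall fun s hs => ?_)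
      have hs2 : s ≤ 2 := le_trans hs.2 (max_le ha2 hb2)
      exact hFb s hs2
  have hbnd : ∀ a b : ℝ, 0 ≤ a → a ≤ b → b ≤ 2 →
      ‖∫ s in a..b, F s‖ ≤ C * ‖x‖ * (b - a) := by
    intro a b ha hab hb2
    have h := intervalIntegral.norm_integral_le_of_norm_le_const (C := C * ‖x‖)
      (f := F) (a := a) (b := b) (fun s hs => by
        rw [Set.uIoc_of_le hab] at hs
        exact hFb s (hs.2.trans hb2))
    rwa [abs_of_nonneg (sub_nonneg.2 hab)] at h
  -- the averaged vectors
  set y : ℝ → X := fun r => r⁻¹ • ∫ s in (0:ℝ)..r, F s with hy_def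
  have claim1 : ∀ r : ℝ, 0 < r → r ≤ 1 →
      Tendsto (fun h : ℝ => T h (y r)) (𝓝[>] 0) (𝓝 (y r)) := by
    intro r hr hr1
    rw [tendsto_iff_norm_sub_tendsto_zero]
    have hint0r : IntervalIntegrable F volume 0 r := hInt 0 r le_rfl (by norm_num) (by linarith)
    have hbound : ∀ h : ℝ, 0 < h → h ≤ 1 →
        ‖T h (y r) - y r‖ ≤ r⁻¹ * (2 * (C * ‖x‖)) * h := by
      intro h hh hh1
      have key1 : T h (y r) = r⁻¹ • ∫ s in (0:ℝ)..r, T h (F s) := by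
        rw [hy_def]
        simp only [_root_.map_smul]
        rw [ContinuousLinearMap.intervalIntegral_comp_comm (T h) hint0r]
      have key2 : (∫ s in (0:ℝ)..r, T h (F s)) = ∫ s in (0:ℝ)..r, F (s + h) := by
        apply intervalIntegral.integral_congr
        intro s hs
        rw [Set.uIcc_of_le hr.le] at hs
        have hs0 : 0 ≤ s := hs.1
        show T h (F s) = F (s + h)
        rw [hF_nonneg s hs0, hF_nonneg (s+h) (by linarith)]
        have h3 : T (h + s) = (T h).comp (T s) := hTadd h s hh.le hs0
        rw [add_comm s h, h3]
        rfl
      have key3 : (∫ s in (0:ℝ)..r, F (s + h)) = ∫ s in h..(r+h), F s := by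
        simpa using intervalIntegral.integral_comp_add_right (a := (0:ℝ)) (b := r) F h
      have I1 : IntervalIntegrable F volume 0 h := hInt 0 h le_rfl (by norm_num) (by linarith)
      have I2 : IntervalIntegrable F volume h (r+h) := hInt h (r+h) hh.le (by linarith) (by linarith)
      have I4 : IntervalIntegrable F volume r (r+h) := hInt r (r+h) hr.le (by linarith) (by linarith)
      have A : (∫ s in (0:ℝ)..h, F s) + (∫ s in h..(r+h), F s) = ∫ s in (0:ℝ)..(r+h), F s :=
        intervalIntegral.integral_add_adjacent_intervals I1 I2
      have B : (∫ s in (0:ℝ)..r, F s) + (∫ s in r..(r+h), F s) = ∫ s in (0:ℝ)..(r+h), F s :=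
        intervalIntegral.integral_add_adjacent_intervals hint0r I4
      have key4 : (∫ s in h..(r+h), F s) - (∫ s in (0:ℝ)..r, F s)
          = (∫ s in r..(r+h), F s) - ∫ s in (0:ℝ)..h, F s := by
        refine sub_eq_sub_iff_add_eq_add.2 ?_
        calc (∫ s in h..(r+h), F s) + (∫ s in (0:ℝ)..h, F s)
            = (∫ s in (0:ℝ)..h, F s) + (∫ s in h..(r+h), F s) := add_comm _ _
          _ = (∫ s in (0:ℝ)..r, F s) + (∫ s in r..(r+h), F s) := A.trans B.symm
          _ = (∫ s in r..(r+h), F s) + (∫ s in (0:ℝ)..r, F s) := add_comm _ _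
      have e1 : T h (y r) - y r = r⁻¹ • ((∫ s in r..(r+h), F s) - ∫ s in (0:ℝ)..h, F s) := by
        rw [key1, key2, key3, hy_def, ← smul_sub, key4]
      rw [e1, norm_smul, Real.norm_eq_abs, abs_of_nonneg (inv_nonneg.2 hr.le)]
      have b1 : ‖∫ s in r..(r+h), F s‖ ≤ C * ‖x‖ * h := by
        have := hbnd r (r+h) hr.le (by linarith) (by linarith)
        simpa using this
      have b2 : ‖∫ s in (0:ℝ)..h, F s‖ ≤ C * ‖x‖ * h := by
        have := hbnd 0 h le_rfl hh.le (by linarith)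
        simpa using this
      calc r⁻¹ * ‖(∫ s in r..(r+h), F s) - ∫ s in (0:ℝ)..h, F s‖
          ≤ r⁻¹ * (‖∫ s in r..(r+h), F s‖ + ‖∫ s in (0:ℝ)..h, F s‖) := by
            gcongr
            exact norm_sub_le _ _
        _ ≤ r⁻¹ * (C * ‖x‖ * h + C * ‖x‖ * h) := by
            gcongr
        _ = r⁻¹ * (2 * (C * ‖x‖)) * h := by ring
    have hev : ∀ᶠ h in 𝓝[>] (0:ℝ), ‖T h (y r) - y r‖ ≤ r⁻¹ * (2 * (C * ‖x‖)) * h := by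
      filter_upwards [Ioo_mem_nhdsGT_of_mem (left_mem_Ico.2 one_pos)] with h hh
      exact hbound h hh.1 hh.2.le
    have hK : Tendsto (fun h : ℝ => r⁻¹ * (2 * (C * ‖x‖)) * h) (𝓝[>] (0:ℝ)) (𝓝 0) := by
      have h1 : Tendsto (fun h : ℝ => r⁻¹ * (2 * (C * ‖x‖)) * h) (𝓝 (0:ℝ))
          (𝓝 (r⁻¹ * (2 * (C * ‖x‖)) * 0)) :=
        (continuous_const.mul continuous_id).tendsto 0
      rw [mul_zero] at h1
      exact h1.mono_left nhdsWithin_le_nhds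
    exact squeeze_zero' (Eventually.of_forall fun h => norm_nonneg _) hev hK
  have claim2 : ∀ f : X →L[ℝ] ℝ, Tendsto (fun r : ℝ => f (y r)) (𝓝[>] 0) (𝓝 (f x)) := by
    intro f
    rw [Metric.tendsto_nhdsWithin_nhds]
    intro ε hε
    have h0 : Tendsto (fun u => f (F u)) (𝓝[≥] (0:ℝ)) (𝓝 (f x)) := by
      have := grc f 0
      rwa [hF0 0 le_rfl] at this
    obtain ⟨δ₀, hδ₀, hδ⟩ := Metric.tendsto_nhdsWithin_nhds.1 h0 (ε/2) (by positivity)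
    refine ⟨min δ₀ 1, by positivity, fun {r} hr hrδ => ?_⟩
    replace hr : 0 < r := hr
    rw [Real.dist_eq, sub_zero, abs_of_pos hr] at hrδ
    have hr1 : r ≤ 1 := le_of_lt (lt_of_lt_of_le hrδ (min_le_right _ _))
    have hrδ₀ : r < δ₀ := lt_of_lt_of_le hrδ (min_le_left _ _)
    have hint0r : IntervalIntegrable F volume 0 r := hInt 0 r le_rfl (by norm_num) (by linarith)
    have hir : IntervalIntegrable (fun s => f (F s)) volume 0 r := by
      rw [intervalIntegrable_iff] at hint0r ⊢
      exact f.integrable_comp hint0r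
    have hyr : f (y r) = r⁻¹ * ∫ s in (0:ℝ)..r, f (F s) := by
      rw [hy_def]
      simp only [_root_.map_smul, smul_eq_mul]
      rw [ContinuousLinearMap.intervalIntegral_comp_comm f hint0r]
    have hdiff : f (y r) - f x = r⁻¹ * ∫ s in (0:ℝ)..r, (f (F s) - f x) := by
      rw [intervalIntegral.integral_sub hir intervalIntegrable_const,
        intervalIntegral.integral_const, hyr, sub_zero, smul_eq_mul, mul_sub,
        ← mul_assoc, inv_mul_cancel₀ (ne_of_gt hr), one_mul]
    have hbnd2 : ‖∫ s in (0:ℝ)..r, (f (F s) - f x)‖ ≤ (ε/2) * |r - 0| := by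
      apply intervalIntegral.norm_integral_le_of_norm_le_const
      intro u hu
      rw [Set.uIoc_of_le hr.le] at hu
      have h1 : dist u 0 < δ₀ := by
        rw [Real.dist_eq, sub_zero, abs_of_pos hu.1]
        exact lt_of_le_of_lt hu.2 hrδ₀
      have h2 := hδ (mem_Ici.2 hu.1.le) h1
      rw [Real.dist_eq] at h2
      exact (le_of_lt h2 : |f (F u) - f x| ≤ ε/2)
    rw [Real.dist_eq, hdiff, abs_mul, abs_of_pos (inv_pos.2 hr)]
    rw [sub_zero, abs_of_pos hr] at hbnd2
    have : r⁻¹ * |∫ s in (0:ℝ)..r, (f (F s) - f x)| ≤ r⁻¹ * ((ε/2) * r) := by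
      gcongr
      exact hbnd2
    rw [← mul_assoc, mul_comm r⁻¹ (ε/2), mul_assoc, inv_mul_cancel₀ (ne_of_gt hr), mul_one] at this
    calc r⁻¹ * |∫ s in (0:ℝ)..r, (f (F s) - f x)| ≤ ε/2 := this
      _ < ε := by linarith
  -- the closed subspace of strongly continuous vectors
  set D : Submodule ℝ X :=
    { carrier := {z : X | Tendsto (fun h : ℝ => T h z) (𝓝[>] 0) (𝓝 z)}
      add_mem' := fun {a b} ha hb => by
        have : Tendsto (fun h : ℝ => T h a + T h b) (𝓝[>] 0) (𝓝 (a + b)) := ha.add hb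
        simpa [map_add] using this
      zero_mem' := by
        have : Tendsto (fun _ : ℝ => (0:X)) (𝓝[>] (0:ℝ)) (𝓝 0) := tendsto_const_nhds
        simpa [map_zero] using this
      smul_mem' := fun c {a} ha => by
        have : Tendsto (fun h : ℝ => c • T h a) (𝓝[>] 0) (𝓝 (c • a)) := ha.const_smul c
        simpa [_root_.map_smul] using this } with hD_def
  have hDclosed : IsClosed (D : Set X) := by
    apply IsSeqClosed.isClosed
    intro z p hzD hzp
    show Tendsto (fun h : ℝ => T h p) (𝓝[>] 0) (𝓝 p)
    rw [Metric.tendsto_nhds]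
    intro ε hε
    have hCp : (0:ℝ) < C + 1 := by linarith
    set ε' : ℝ := ε / (3 * (C + 1)) with hε'_def
    have hε' : 0 < ε' := by positivity
    obtain ⟨N, hN⟩ := Metric.tendsto_atTop.1 hzp ε' hε'
    have hzN : dist (z N) p < ε' := hN N le_rfl
    have hzn : Tendsto (fun h : ℝ => T h (z N)) (𝓝[>] 0) (𝓝 (z N)) := hzD N
    have hev1 : ∀ᶠ h in 𝓝[>] (0:ℝ), dist (T h (z N)) (z N) < ε/3 :=
      (Metric.tendsto_nhds.1 hzn) (ε/3) (by positivity)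
    filter_upwards [hev1, Ioo_mem_nhdsGT_of_mem (left_mem_Ico.2 one_pos)] with h h1 h2
    have hTh : ‖T h‖ ≤ C := hC h h2.1.le (by linarith [h2.2])
    have e1 : ‖T h p - T h (z N)‖ ≤ C * ‖p - z N‖ := by
      rw [← map_sub]
      calc ‖T h (p - z N)‖ ≤ ‖T h‖ * ‖p - z N‖ := (T h).le_opNorm _
        _ ≤ C * ‖p - z N‖ := by gcongr
    have e2 : ‖p - z N‖ < ε' := by
      rw [← dist_eq_norm, dist_comm]
      exact hzN
    have e3 : C * ‖p - z N‖ ≤ C * ε' := mul_le_mul_of_nonneg_left e2.le hC0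
    have e4 : C * ε' + ε' = ε / 3 := by
      rw [hε'_def]
      field_simp
    calc dist (T h p) p ≤ dist (T h p) (T h (z N)) + dist (T h (z N)) (z N) + dist (z N) p :=
          dist_triangle4 _ _ _ _
      _ < (C * ε') + ε/3 + ε' := by
          apply add_lt_add_of_lt_of_lt _ hzN
          apply add_lt_add_of_le_of_lt _ h1
          rw [dist_eq_norm]
          exact e1.trans e3
      _ ≤ ε := by linarith
  have hspan : Submodule.span ℝ {z | ∃ r : ℝ, 0 < r ∧ r ≤ 1 ∧ z = y r} ≤ D := by
    rw [Submodule.span_le]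
    rintro z ⟨r, h1, h2, rfl⟩
    exact claim1 r h1 h2
  have hND : (Submodule.span ℝ {z | ∃ r : ℝ, 0 < r ∧ r ≤ 1 ∧ z = y r}).topologicalClosure ≤ D :=
    Submodule.topologicalClosure_minimal _ hspan hDclosed
  have hxN : x ∈ (Submodule.span ℝ {z | ∃ r : ℝ, 0 < r ∧ r ≤ 1 ∧ z = y r}).topologicalClosure := by
    by_contra hx
    obtain ⟨f, v, hfv, hv⟩ := geometric_hahn_banach_point_closed (Submodule.convex _)
      (Submodule.isClosed_topologicalClosure _) hx
    obtain ⟨hvanish, hv0⟩ := vanish_on_submodule _ f v hv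
    have h1 : Tendsto (fun r => f (y r)) (𝓝[>] 0) (𝓝 (f x)) := claim2 f
    have h2 : ∀ᶠ r in 𝓝[>] (0:ℝ), f (y r) = 0 := by
      filter_upwards [Ioo_mem_nhdsGT_of_mem (left_mem_Ico.2 one_pos)] with r hr
      exact hvanish _ (Submodule.le_topologicalClosure _
        (Submodule.subset_span ⟨r, hr.1, hr.2.le, rfl⟩))
    have h3 : Tendsto (fun _ : ℝ => (0:ℝ)) (𝓝[>] (0:ℝ)) (𝓝 (f x)) := h1.congr' h2
    have h4 : f x = 0 := tendsto_nhds_unique h3 tendsto_const_nhds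
    linarith
  exact hND hxN
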